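/- Let F be the formal power series over ℚ whose coefficient of q^n is (n+1)·σ₁(n+1), i.e., F = Σ_{k≥1} k·σ₁(k)·q^{k−1}. Then for every natural number g ≥ 1, the Bryan–Leung count N_{g,6} := g · (coefficient of q^6 in F^{g−1}) satisfies N_{g,6} = (4/5)·g(g−1)(81g⁵ − 810g⁴ + 4095g³ − 11835g² + 18409g − 11800). -/

import Mathlib

noncomputable def FBL : PowerSeries ℚ :=
  PowerSeries.mk fun n => (((n + 1) * ArithmeticFunction.sigma 1 (n + 1) : ℕ) : ℚ)

lemma FBL_coeff (n : ℕ) : PowerSeries.coeff (R := ℚ) n FBL = (((n + 1) * ArithmeticFunction.sigma 1 (n + 1) : ℕ) : ℚ) := by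
  simp [FBL]

lemma FBL_c0 : PowerSeries.coeff (R := ℚ) 0 FBL = 1 := by
  rw [FBL_coeff, show ((0+1) * ArithmeticFunction.sigma 1 (0+1) : ℕ) = 1 from by decide]; norm_num
lemma FBL_c1 : PowerSeries.coeff (R := ℚ) 1 FBL = 6 := by
  rw [FBL_coeff, show ((1+1) * ArithmeticFunction.sigma 1 (1+1) : ℕ) = 6 from by decide]; norm_num
lemma FBL_c2 : PowerSeries.coeff (R := ℚ) 2 FBL = 12 := by
  rw [FBL_coeff, show ((2+1) * ArithmeticFunction.sigma 1 (2+1) : ℕ) = 12 from by decide]; norm_num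
lemma FBL_c3 : PowerSeries.coeff (R := ℚ) 3 FBL = 28 := by
  rw [FBL_coeff, show ((3+1) * ArithmeticFunction.sigma 1 (3+1) : ℕ) = 28 from by decide]; norm_num
lemma FBL_c4 : PowerSeries.coeff (R := ℚ) 4 FBL = 30 := by
  rw [FBL_coeff, show ((4+1) * ArithmeticFunction.sigma 1 (4+1) : ℕ) = 30 from by decide]; norm_num
lemma FBL_c5 : PowerSeries.coeff (R := ℚ) 5 FBL = 72 := by
  rw [FBL_coeff, show ((5+1) * ArithmeticFunction.sigma 1 (5+1) : ℕ) = 72 from by decide]; norm_num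
lemma FBL_c6 : PowerSeries.coeff (R := ℚ) 6 FBL = 56 := by
  rw [FBL_coeff, show ((6+1) * ArithmeticFunction.sigma 1 (6+1) : ℕ) = 56 from by decide]; norm_num

lemma FBL_pow_coeffs (m : ℕ) :
    PowerSeries.coeff (R := ℚ) 0 (FBL ^ m) = 1 ∧
    PowerSeries.coeff (R := ℚ) 1 (FBL ^ m) = 6 * m ∧
    PowerSeries.coeff (R := ℚ) 2 (FBL ^ m) = -6 * m + 18 * m ^ 2 ∧
    PowerSeries.coeff (R := ℚ) 3 (FBL ^ m) = 28 * m - 36 * m ^ 2 + 36 * m ^ 3 ∧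
    PowerSeries.coeff (R := ℚ) 4 (FBL ^ m) = -102 * m + 186 * m ^ 2 - 108 * m ^ 3 + 54 * m ^ 4 ∧
    PowerSeries.coeff (R := ℚ) 5 (FBL ^ m) = (1956/5) * m - 780 * m ^ 2 + 612 * m ^ 3 - 216 * m ^ 4 + (324/5) * m ^ 5 ∧
    PowerSeries.coeff (R := ℚ) 6 (FBL ^ m) = -1488 * m + (16756/5) * m ^ 2 - 2880 * m ^ 3 + 1332 * m ^ 4 - 324 * m ^ 5 + (324/5) * m ^ 6 := by
  induction m with
  | zero => simp [PowerSeries.coeff_one]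
  | succ m ih =>
    obtain ⟨h0, h1, h2, h3, h4, h5, h6⟩ := ih
    have key : ∀ n, PowerSeries.coeff (R := ℚ) n (FBL ^ (m + 1)) =
        ∑ p ∈ Finset.HasAntidiagonal.antidiagonal n, PowerSeries.coeff (R := ℚ) p.1 (FBL ^ m) * PowerSeries.coeff (R := ℚ) p.2 FBL := by
      intro n; rw [pow_succ, PowerSeries.coeff_mul]
    refine ⟨?_, ?_, ?_, ?_, ?_, ?_, ?_⟩ <;>
      rw [key] <;>
      simp [Finset.Nat.sum_antidiagonal_eq_sum_range_succ_mk, Finset.sum_range_succ,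
        h0, h1, h2, h3, h4, h5, h6, FBL_c0, FBL_c1, FBL_c2, FBL_c3, FBL_c4, FBL_c5, FBL_c6] <;>
      ring

/-- The Bryan–Leung count `N_{g,6} := g · (coefficient of q^6 in F^{g−1})`
is given by the node polynomial of Table (5.1). -/
theorem N_g_6 (g : ℕ) (hg : 1 ≤ g) :
    (g : ℚ) * (PowerSeries.coeff (R := ℚ) 6) (FBL ^ (g - 1)) =
      (4 / 5 : ℚ) * (g : ℚ) * ((g : ℚ) - 1) * (81 * (g : ℚ) ^ 5 - 810 * (g : ℚ) ^ 4 + 4095 * (g : ℚ) ^ 3 - 11835 * (g : ℚ) ^ 2 + 18409 * (g : ℚ) - 11800) := by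
  have h := (FBL_pow_coeffs (g - 1)).2.2.2.2.2.2
  rw [h]
  have hc : ((g - 1 : ℕ) : ℚ) = (g : ℚ) - 1 := by
    rw [Nat.cast_sub hg, Nat.cast_one]
  rw [hc]; ring
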